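/- Let R = (X⊗X+Y⊗Y)/2 and R_Heis = (X⊗X+Y⊗Y+Z⊗Z)/2. Then for every real α, (Z⊗I) exp(−iα R_Heis) (Z⊗I) exp(iα R_Heis) = exp(2iα R). -/

import Mathlib

open Matrix
open scoped Kronecker

noncomputable section

/-- Matrix exponential, defined by its power series. -/
def mexp {m : Type*} [Fintype m] [DecidableEq m] (A : Matrix m m ℂ) : Matrix m m ℂ :=
  ∑' k : ℕ, ((k.factorial : ℂ)⁻¹) • A ^ k

/-- Pauli X. -/
def PX : Matrix (Fin 2) (Fin 2) ℂ := !![0, 1; 1, 0]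
/-- Pauli Y. -/
def PY : Matrix (Fin 2) (Fin 2) ℂ := !![0, -Complex.I; Complex.I, 0]
/-- Pauli Z. -/
def PZ : Matrix (Fin 2) (Fin 2) ℂ := !![1, 0; 0, -1]

/-- The XY interaction `R = (X⊗X + Y⊗Y)/2`. -/
def Rxy : Matrix (Fin 2 × Fin 2) (Fin 2 × Fin 2) ℂ :=
  (2 : ℂ)⁻¹ • (PX ⊗ₖ PX + PY ⊗ₖ PY)

/-- The Heisenberg interaction `R_Heis = (X⊗X + Y⊗Y + Z⊗Z)/2`. -/
def RHeis : Matrix (Fin 2 × Fin 2) (Fin 2 × Fin 2) ℂ :=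
  (2 : ℂ)⁻¹ • (PX ⊗ₖ PX + PY ⊗ₖ PY + PZ ⊗ₖ PZ)

/-- `(Z⊗Z)/2`. -/
def Szz : Matrix (Fin 2 × Fin 2) (Fin 2 × Fin 2) ℂ := (2 : ℂ)⁻¹ • (PZ ⊗ₖ PZ)
/-- `Z⊗I`. -/
def U : Matrix (Fin 2 × Fin 2) (Fin 2 × Fin 2) ℂ := PZ ⊗ₖ (1 : Matrix (Fin 2) (Fin 2) ℂ)

lemma hZZ : PZ * PZ = 1 := by
  rw [PZ, Matrix.mul_fin_two, Matrix.one_fin_two]; norm_num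
lemma hZXZ : PZ * PX * PZ = -PX := by
  rw [PZ, PX, Matrix.mul_fin_two, Matrix.mul_fin_two]; norm_num
lemma hZYZ : PZ * PY * PZ = -PY := by
  rw [PZ, PY, Matrix.mul_fin_two, Matrix.mul_fin_two]; norm_num
lemma hXZ : PX * PZ = -(PZ * PX) := by
  rw [PZ, PX, Matrix.mul_fin_two, Matrix.mul_fin_two]; norm_num
lemma hYZ : PY * PZ = -(PZ * PY) := by
  rw [PZ, PY, Matrix.mul_fin_two, Matrix.mul_fin_two]; norm_num

lemma hU2 : U * U = 1 := by
  rw [U, ← Matrix.mul_kronecker_mul, hZZ, one_mul, Matrix.one_kronecker_one]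

lemma hUconj (A B : Matrix (Fin 2) (Fin 2) ℂ) :
    U * (A ⊗ₖ B) * U = (PZ * A * PZ) ⊗ₖ B := by
  rw [U, ← Matrix.mul_kronecker_mul, ← Matrix.mul_kronecker_mul, one_mul, mul_one]

lemma negk (A B : Matrix (Fin 2) (Fin 2) ℂ) : (-A) ⊗ₖ B = -(A ⊗ₖ B) := by
  rw [← neg_one_smul ℂ A, Matrix.smul_kronecker, neg_one_smul]
lemma knegk (A B : Matrix (Fin 2) (Fin 2) ℂ) : (-A) ⊗ₖ (-B) = A ⊗ₖ B := by
  rw [negk, ← neg_one_smul ℂ B, Matrix.kronecker_smul, neg_one_smul, neg_neg]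

lemma hconj : U * RHeis * U = Szz - Rxy := by
  rw [RHeis, Matrix.mul_smul, Matrix.smul_mul, mul_add, add_mul, mul_add, add_mul,
    hUconj, hUconj, hUconj, hZXZ, hZYZ, hZZ, one_mul,
    negk, negk, Rxy, Szz]
  rw [← smul_sub]
  congr 1
  abel

lemma hRH : RHeis = Rxy + Szz := by
  rw [RHeis, Rxy, Szz, ← smul_add]

lemma hcomm : Commute Rxy Szz := by
  show Rxy * Szz = Szz * Rxy
  rw [Rxy, Szz, Matrix.smul_mul, Matrix.mul_smul, Matrix.smul_mul, Matrix.mul_smul]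
  congr 1
  rw [add_mul, mul_add, ← Matrix.mul_kronecker_mul, ← Matrix.mul_kronecker_mul,
    ← Matrix.mul_kronecker_mul, ← Matrix.mul_kronecker_mul, hXZ, hYZ,
    knegk, knegk]

lemma mexp_eq (A : Matrix (Fin 2 × Fin 2) (Fin 2 × Fin 2) ℂ) :
    mexp A = NormedSpace.exp A := by
  rw [NormedSpace.exp_eq_tsum (𝕂 := ℂ)]; rfl

/-- **`(Z⊗I) exp(−iα R_Heis) (Z⊗I) exp(iα R_Heis) = exp(2iα R)`** for every real `α`. -/
theorem Z_conj_exp_Heis_eq_exp_XY (α : ℝ) :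
    (PZ ⊗ₖ (1 : Matrix (Fin 2) (Fin 2) ℂ)) * mexp ((-(Complex.I * α)) • RHeis)
        * (PZ ⊗ₖ (1 : Matrix (Fin 2) (Fin 2) ℂ)) * mexp ((Complex.I * α) • RHeis)
      = mexp ((2 * Complex.I * α) • Rxy) := by
  set c : ℂ := Complex.I * α with hc
  have hUinv : U⁻¹ = U := Matrix.inv_eq_right_inv hU2
  have hUunit : IsUnit U := ⟨⟨U, U, hU2, hU2⟩, rfl⟩
  have hcomm' : Commute (c • Rxy - c • Szz) (c • Rxy + c • Szz) := by
    have h1 : Commute (c • Rxy) (c • Szz) := (hcomm.smul_left c).smul_right c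
    exact ((Commute.refl (c • Rxy)).add_right h1).sub_left
      ((h1.symm.add_right (Commute.refl (c • Szz))))
  have key : U * NormedSpace.exp ((-c) • RHeis) * U
      = NormedSpace.exp (c • Rxy - c • Szz) := by
    have h := Matrix.exp_conj U ((-c) • RHeis) hUunit
    rw [hUinv] at h
    rw [← h]
    congr 1
    rw [Matrix.mul_smul, Matrix.smul_mul, hconj, neg_smul, smul_sub, neg_sub]
  calc (PZ ⊗ₖ (1 : Matrix (Fin 2) (Fin 2) ℂ)) * mexp ((-c) • RHeis)
        * (PZ ⊗ₖ (1 : Matrix (Fin 2) (Fin 2) ℂ)) * mexp (c • RHeis)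
      = (U * NormedSpace.exp ((-c) • RHeis) * U) * NormedSpace.exp (c • RHeis) := by
        rw [mexp_eq, mexp_eq]; rfl
    _ = NormedSpace.exp (c • Rxy - c • Szz) * NormedSpace.exp (c • Rxy + c • Szz) := by
        rw [key, hRH, smul_add]
    _ = NormedSpace.exp ((c • Rxy - c • Szz) + (c • Rxy + c • Szz)) :=
        (Matrix.exp_add_of_commute _ _ hcomm').symm
    _ = mexp ((2 * Complex.I * α) • Rxy) := by
        rw [mexp_eq]
        congr 1
        rw [hc]
        module

end
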